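/- arXiv:1603.00731 — 2 statements merged into one kernel-verified Lean document; each statement's English description precedes it below -/
import Mathlib

section
/- For every integer k ≥ 2, writing A_k = ⋃_{j=k}^∞ J_j where J_j = S_j([0,1]), one has P(A_k) > 0 and (1/P(A_k)) · ∫_{A_k} x dP(x) = 1 − (8/7)·(1/2^k). -/
open MeasureTheory

noncomputable section

/-- The contractive similarity `S j x = x / 2^(j+1) + 1 - 1/2^(j-1)` (used for `j ≥ 1`). -/
def S (j : ℕ) (x : ℝ) : ℝ := x / 2 ^ (j + 1) + 1 - 1 / 2 ^ (j - 1)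

/-- The similarity ratio `s j = 1/2^(j+1)`. -/
def s (j : ℕ) : ℝ := 1 / 2 ^ (j + 1)

/-- The probability vector: `p 1 = 1/4`, `p j = 3/2^(j+1)` for `j ≥ 2`. -/
def p (j : ℕ) : ℝ := if j = 1 then 1 / 4 else 3 / 2 ^ (j + 1)

/-- `Sw ω = S_{ω_1} ∘ ⋯ ∘ S_{ω_k}`. -/
def Sw (ω : List ℕ) : ℝ → ℝ := ω.foldr (fun j f => S j ∘ f) id

/-- `pw ω = p_{ω_1} ⋯ p_{ω_k}`. -/
def pw (ω : List ℕ) : ℝ := (ω.map p).prod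

/-- `sw ω = s_{ω_1} ⋯ s_{ω_k}`. -/
def sw (ω : List ℕ) : ℝ := (ω.map s).prod

/-- The basic interval `J_ω = S_ω([0,1])`. -/
def Jw (ω : List ℕ) : Set ℝ := Sw ω '' Set.Icc 0 1

/-- The last letter of a word (junk value `0` for the empty word). -/
def wlast (ω : List ℕ) : ℕ := ω.getLastD 0

/-- `wext ω j = ω^-(ω_k + j)`: the word `ω` with its last letter increased by `j`. -/
def wext (ω : List ℕ) (j : ℕ) : List ℕ := ω.dropLast ++ [wlast ω + j]

/-- `J_{(ω,∞)} = ⋃_{j=1}^∞ J_{ω^-(ω_k+j)}`. -/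
def Jinf (ω : List ℕ) : Set ℝ := ⋃ j : ℕ, Jw (wext ω (j + 1))

/-- `a(ω) = S_ω(4/7)`. -/
def aw (ω : List ℕ) : ℝ := Sw ω (4 / 7)

/-- `a(ω,∞) = S_{ω^-(ω_k+1)}(4/7) + (8/7) s_{ω^-(ω_k+1)}`. -/
def ainf (ω : List ℕ) : ℝ := Sw (wext ω 1) (4 / 7) + (8 / 7) * sw (wext ω 1)

/-- A (nonempty) word over the alphabet `{1, 2, 3, …}`. -/
def IsWord (ω : List ℕ) : Prop := ω ≠ [] ∧ ∀ i ∈ ω, 1 ≤ i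

/-- The invariance relation `P(A) = ∑_{j=1}^∞ p_j P(S_j⁻¹ A)`. -/
def Invariant (P : Measure ℝ) : Prop :=
  ∀ A : Set ℝ, MeasurableSet A →
    P A = ∑' j : ℕ, ENNReal.ofReal (p (j + 1)) * P (S (j + 1) ⁻¹' A)

/-- The distortion error `∫ min_{a ∈ α} (x-a)² dP` of a set `α ⊆ ℝ`. -/
def distortion (P : Measure ℝ) (α : Set ℝ) : ℝ :=
  ∫ x, (⨅ a : α, (x - (a : ℝ)) ^ 2) ∂P

/-- The `n`-th quantization error for `P`. -/
def quantErr (P : Measure ℝ) (n : ℕ) : ℝ :=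
  sInf {r : ℝ | ∃ α : Set ℝ, 1 ≤ α.ncard ∧ α.ncard ≤ n ∧ r = distortion P α}

/-- `α` is an optimal set of `n`-means for `P`. -/
def IsOptimal (P : Measure ℝ) (n : ℕ) (α : Set ℝ) : Prop :=
  1 ≤ α.ncard ∧ α.ncard ≤ n ∧ distortion P α = quantErr P n

/-- `E(a(ω)) = ∫_{J_ω} (x - a(ω))² dP`. -/
def Ea (P : Measure ℝ) (ω : List ℕ) : ℝ := ∫ x in Jw ω, (x - aw ω) ^ 2 ∂P

/-- `E(a(ω,∞)) = ∫_{J_{(ω,∞)}} (x - a(ω,∞))² dP`. -/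
def Eainf (P : Measure ℝ) (ω : List ℕ) : ℝ := ∫ x in Jinf ω, (x - ainf ω) ^ 2 ∂P

/-- The Voronoi region `M(a|α)`. -/
def voronoi (α : Set ℝ) (a : ℝ) : Set ℝ := {x : ℝ | ∀ b ∈ α, |x - a| ≤ |x - b|}

lemma S_succ (n : ℕ) (x : ℝ) : S (n+1) x = (1/2^(n+2)) * x + (1 - 1/2^n) := by
  simp [S]; ring

lemma measurable_S (m : ℕ) : Measurable (S m) := by
  unfold S; fun_prop

lemma Jw_single (n : ℕ) :
    Jw [n+1] = Set.Icc (1 - 1/2^n) (1 - 1/2^n + 1/2^(n+2)) := by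
  have : Sw [n+1] = S (n+1) := by
    funext x; simp [Sw]
  rw [Jw, this]
  have h2 : (0:ℝ) < 1/2^(n+2) := by positivity
  have : S (n+1) = fun x => (1/2^(n+2) : ℝ) * x + (1 - 1/2^n) := by
    funext x; exact S_succ n x
  rw [this, Set.image_affine_Icc' h2]
  rw [mul_zero, mul_one, zero_add]
  ring_nf

lemma Jw_subset (n : ℕ) : Jw [n+1] ⊆ Set.Icc 0 1 := by
  rw [Jw_single]
  apply Set.Icc_subset_Icc
  · have : (1:ℝ)/2^n ≤ 1 := by
      rw [div_le_one (by positivity)]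
      exact one_le_pow₀ (by norm_num)
    linarith
  · have h1 : (1:ℝ)/2^(n+2) ≤ 1/2^n := by
      apply div_le_div_of_nonneg_left (by norm_num) (by positivity)
      exact pow_le_pow_right₀ (by norm_num) (by omega)
    linarith

lemma Jw_meas (n : ℕ) : MeasurableSet (Jw [n+1]) := by
  rw [Jw_single]; exact measurableSet_Icc

lemma Jw_disj {n n' : ℕ} (h : n < n') : Disjoint (Jw [n+1]) (Jw [n'+1]) := by
  rw [Jw_single, Jw_single, Set.disjoint_left]
  rintro x ⟨_, hx2⟩ ⟨hx3, _⟩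
  have h1 : (1:ℝ)/2^n' ≤ 1/2^(n+1) := by
    apply div_le_div_of_nonneg_left (by norm_num) (by positivity)
    exact pow_le_pow_right₀ (by norm_num) h
  have h2 : (1:ℝ)/2^(n+2) + 1/2^(n+1) < 1/2^n := by
    have e1 : (2:ℝ)^(n+2) = 2^n * 4 := by ring
    have e2 : (2:ℝ)^(n+1) = 2^n * 2 := by ring
    rw [e1, e2]
    have hpos : (0:ℝ) < 2^n := by positivity
    rw [div_add_div _ _ (by positivity) (by positivity), div_lt_div_iff₀ (by positivity) hpos]
    ring_nf
    have : (0:ℝ) < 2^(n*2) := by positivity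
    linarith
  linarith

lemma p_nonneg (m : ℕ) : 0 ≤ p m := by unfold p; split <;> positivity

lemma measure_decomp (P : Measure ℝ) (hinv : Invariant P) :
    P = Measure.sum (fun j => ENNReal.ofReal (p (j+1)) • P.map (S (j+1))) := by
  ext A hA
  rw [hinv A hA, Measure.sum_apply _ hA]
  congr 1; funext j
  rw [Measure.smul_apply, Measure.map_apply (measurable_S _) hA, smul_eq_mul]

lemma integral_invariant (P : Measure ℝ) (hinv : Invariant P)
    {f : ℝ → ℝ} (hfm : Measurable f) (hfi : Integrable f P) :
    ∫ x, f x ∂P = ∑' j, p (j+1) * ∫ x, f (S (j+1) x) ∂P := by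
  have hd := measure_decomp P hinv
  have hint : Integrable f
      (Measure.sum (fun j => ENNReal.ofReal (p (j+1)) • P.map (S (j+1)))) := by
    rw [← hd]; exact hfi
  calc ∫ x, f x ∂P
      = ∑' j, ∫ x, f x ∂(ENNReal.ofReal (p (j+1)) • P.map (S (j+1))) := by
        conv_lhs => rw [hd]
        exact integral_sum_measure hint
    _ = ∑' j, p (j+1) * ∫ x, f (S (j+1) x) ∂P := by
        congr 1; funext j
        rw [integral_smul_measure,
          integral_map (measurable_S _).aemeasurable hfm.aestronglyMeasurable,
          ENNReal.toReal_ofReal (p_nonneg _), smul_eq_mul]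

lemma hgeom2 : Summable (fun n : ℕ => (1/2:ℝ)^n) :=
  summable_geometric_of_lt_one (by norm_num) (by norm_num)

lemma hgeom4 : Summable (fun n : ℕ => (1/4:ℝ)^n) :=
  summable_geometric_of_lt_one (by norm_num) (by norm_num)

lemma tsum2 : ∑' n : ℕ, (1/2:ℝ)^n = 2 := by
  rw [tsum_geometric_of_lt_one (by norm_num) (by norm_num)]; norm_num

lemma tsum4 : ∑' n : ℕ, (1/4:ℝ)^n = 4/3 := by
  rw [tsum_geometric_of_lt_one (by norm_num) (by norm_num)]; norm_num

lemma tsum_lin (c1 c2 : ℝ) :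
    ∑' n : ℕ, (c1 * (1/4:ℝ)^n + c2 * (1/2:ℝ)^n) = c1 * (4/3) + c2 * 2 := by
  rw [Summable.tsum_add (hgeom4.mul_left c1) (hgeom2.mul_left c2), tsum_mul_left, tsum_mul_left,
    tsum2, tsum4]

section Main
variable (P : Measure ℝ) [IsProbabilityMeasure P]

lemma compl_null (hsupp : P (Set.Icc 0 1) = 1) : P (Set.Icc (0:ℝ) 1)ᶜ = 0 := by
  have h := measure_compl (μ := P) (measurableSet_Icc (a := (0:ℝ)) (b := 1))
    (measure_ne_top P _)
  rw [hsupp, measure_univ] at h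
  simpa using h

lemma ae_mem_Icc (hsupp : P (Set.Icc 0 1) = 1) : ∀ᵐ x ∂P, x ∈ Set.Icc (0:ℝ) 1 :=
  MeasureTheory.mem_ae_iff.2 (compl_null P hsupp)

lemma integrable_clamp (hsupp : P (Set.Icc 0 1) = 1) :
    Integrable ((Set.Icc (0:ℝ) 1).indicator id) P := by
  apply (integrable_const (1:ℝ)).mono'
    ((measurable_id.indicator measurableSet_Icc).aestronglyMeasurable)
  filter_upwards with x
  by_cases hx : x ∈ Set.Icc (0:ℝ) 1
  · rw [Set.indicator_of_mem hx]
    simp only [id]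
    rw [Real.norm_eq_abs, abs_le]
    exact ⟨by linarith [hx.1], hx.2⟩
  · rw [Set.indicator_of_notMem hx]; simp

lemma integrable_id (hsupp : P (Set.Icc 0 1) = 1) : Integrable (fun x : ℝ => x) P := by
  apply (integrable_clamp P hsupp).congr
  filter_upwards [ae_mem_Icc P hsupp] with x hx
  exact Set.indicator_of_mem hx id

lemma integral_S (hsupp : P (Set.Icc 0 1) = 1) (n : ℕ) :
    ∫ x, S (n+1) x ∂P = (1/2^(n+2)) * (∫ x, x ∂P) + (1 - 1/2^n) := by
  simp only [S_succ]
  rw [integral_add ((integrable_id P hsupp).const_mul _) (integrable_const _),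
    integral_const_mul, integral_const, probReal_univ]
  simp

lemma E_eq (hsupp : P (Set.Icc 0 1) = 1) (hinv : Invariant P) :
    ∫ x, x ∂P = 4/7 := by
  set E := ∫ x, x ∂P with hE
  have key := integral_invariant P hinv measurable_id (integrable_id P hsupp)
  simp only [id] at key
  set g : ℕ → ℝ := fun j => p (j+1) * ∫ x, S (j+1) x ∂P with hg
  have keyg : E = ∑' j, g j := key
  have hform : ∀ n : ℕ, g (n+1) = (3*E/64 - 3/16) * (1/4:ℝ)^n + (3/8) * (1/2:ℝ)^n := by
    intro n
    rw [hg]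
    simp only [integral_S P hsupp, p]
    rw [if_neg (by omega)]
    have e4 : (1/4:ℝ)^n = (1/2:ℝ)^n * (1/2:ℝ)^n := by
      rw [← mul_pow]; norm_num
    have e1 : (2:ℝ)^(n+1+1+1) = 2^n * 8 := by ring
    have e3 : (2:ℝ)^(n+1) = 2^n * 2 := by ring
    have h2 : ((1/2:ℝ))^n = 1/2^n := by rw [one_div, inv_pow, one_div]
    have hne : (2:ℝ)^n ≠ 0 := by positivity
    rw [e1, e3, e4, h2]
    field_simp
    ring
  have hsum1 : Summable (fun n => g (n+1)) := by
    rw [show (fun n => g (n+1)) = fun n =>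
      (3*E/64 - 3/16) * (1/4:ℝ)^n + (3/8) * (1/2:ℝ)^n from funext hform]
    exact (hgeom4.mul_left _).add (hgeom2.mul_left _)
  have hsumg : Summable g := (summable_nat_add_iff 1).mp hsum1
  have htail : ∑' n, g (n+1) = (3*E/64 - 3/16) * (4/3) + (3/8) * 2 := by
    rw [tsum_congr hform, tsum_lin]
  have hg0 : g 0 = E/16 := by
    rw [hg]
    simp only [integral_S P hsupp, p]
    rw [← hE]
    norm_num
    ring
  rw [Summable.tsum_eq_zero_add hsumg, hg0, htail] at keyg
  linarith
end Main

lemma mem_Jw_of_mem (m : ℕ) {x : ℝ} (hx : x ∈ Set.Icc (0:ℝ) 1) : S m x ∈ Jw [m] :=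
  ⟨x, hx, rfl⟩

set_option maxHeartbeats 1000000 in
/-- For `k ≥ 2` and `A_k = ⋃_{j=k}^∞ J_j`, one has `P(A_k) > 0` and
`(1/P(A_k)) ∫_{A_k} x dP = 1 - (8/7)(1/2^k)`. -/
theorem stmt_2 (P : Measure ℝ) [IsProbabilityMeasure P]
    (hsupp : P (Set.Icc 0 1) = 1) (hinv : Invariant P) (k : ℕ) (hk : 2 ≤ k) :
    0 < P (⋃ j : ℕ, Jw [k + j]) ∧
      (1 / (P (⋃ j : ℕ, Jw [k + j])).toReal) * ∫ x in (⋃ j : ℕ, Jw [k + j]), x ∂P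
        = 1 - (8 / 7) * (1 / 2 ^ k) := by
  obtain ⟨k', rfl⟩ : ∃ k', k = k' + 2 := ⟨k - 2, by omega⟩
  set A : Set ℝ := ⋃ j : ℕ, Jw [k' + 2 + j] with hA
  have hJ_eq : ∀ j : ℕ, Jw [k' + 2 + j] = Jw [(k' + 1 + j) + 1] := by
    intro j
    have h : k' + 2 + j = k' + 1 + j + 1 := by omega
    rw [h]
  have hA_meas : MeasurableSet A := by
    apply MeasurableSet.iUnion
    intro j; rw [hJ_eq j]; exact Jw_meas _
  have hA_sub : A ⊆ Set.Icc 0 1 := by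
    apply Set.iUnion_subset
    intro j; rw [hJ_eq j]; exact Jw_subset _
  -- preimage facts
  have hpre1 : ∀ j : ℕ, k' + 1 ≤ j → P (S (j + 1) ⁻¹' A) = 1 := by
    intro j hj
    have hsub : Set.Icc (0:ℝ) 1 ⊆ S (j + 1) ⁻¹' A := by
      intro x hx
      have h1 : S (j + 1) x ∈ Jw [j + 1] := mem_Jw_of_mem _ hx
      have h2 : Jw [j + 1] ⊆ A := by
        have he : j + 1 = k' + 2 + (j - (k' + 1)) := by omega
        rw [he]
        exact Set.subset_iUnion (fun i => Jw [k' + 2 + i]) (j - (k' + 1))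
      exact h2 h1
    refine le_antisymm prob_le_one ?_
    calc (1:ENNReal) = P (Set.Icc 0 1) := hsupp.symm
      _ ≤ P (S (j + 1) ⁻¹' A) := measure_mono hsub
  have hpre0 : ∀ j : ℕ, j ≤ k' → P (S (j + 1) ⁻¹' A) = 0 := by
    intro j hj
    have hsub : S (j + 1) ⁻¹' A ⊆ (Set.Icc (0:ℝ) 1)ᶜ := by
      intro x hx hxI
      have h1 : S (j + 1) x ∈ Jw [j + 1] := mem_Jw_of_mem _ hxI
      obtain ⟨i, hi⟩ := Set.mem_iUnion.1 hx
      rw [hJ_eq i] at hi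
      exact (Jw_disj (show j < k' + 1 + i by omega)).le_bot ⟨h1, hi⟩
    exact le_antisymm ((measure_mono hsub).trans (compl_null P hsupp).le) zero_le
  -- measure of A
  have hPA : P A = ENNReal.ofReal (3 / 2 ^ (k' + 2) : ℝ) := by
    rw [hinv A hA_meas]
    set f : ℕ → ENNReal := fun j => ENNReal.ofReal (p (j + 1)) * P (S (j + 1) ⁻¹' A) with hf
    have h1 : ∑' j, f j = ∑ j ∈ Finset.range (k' + 1), f j + ∑' i, f (i + (k' + 1)) :=
      (Summable.sum_add_tsum_nat_add' (f := f) (k := k' + 1) ENNReal.summable).symm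
    have h2 : ∑ j ∈ Finset.range (k' + 1), f j = 0 := by
      apply Finset.sum_eq_zero
      intro j hj
      rw [hf]
      simp only
      rw [hpre0 j (by simpa using Nat.lt_succ_iff.mp (Finset.mem_range.1 hj)), mul_zero]
    have h3 : ∀ i : ℕ, f (i + (k' + 1)) = ENNReal.ofReal ((3 / 2 ^ (k' + 3) : ℝ) * (1/2)^i) := by
      intro i
      rw [hf]
      simp only
      rw [hpre1 _ (by omega), mul_one]
      congr 1
      unfold p
      rw [if_neg (by omega)]
      have he : (2:ℝ) ^ (i + (k' + 1) + 1 + 1) = 2 ^ (k' + 3) * 2 ^ i := by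
        rw [← pow_add]; congr 1; omega
      have h2i : ((1:ℝ)/2)^i = 1/2^i := by rw [one_div, inv_pow, one_div]
      rw [he, h2i]
      have : (2:ℝ)^i ≠ 0 := by positivity
      have : (2:ℝ)^(k'+3) ≠ 0 := by positivity
      field_simp
    have h4 : ∑' i : ℕ, f (i + (k' + 1)) = ENNReal.ofReal (3 / 2 ^ (k' + 2) : ℝ) := by
      rw [tsum_congr h3, ← ENNReal.ofReal_tsum_of_nonneg (fun i => by positivity)
        (hgeom2.mul_left _), tsum_mul_left, tsum2]
      congr 1
      have he : (2:ℝ) ^ (k' + 3) = 2 ^ (k' + 2) * 2 := by rw [← pow_succ]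
      rw [he]
      have : (2:ℝ)^(k'+2) ≠ 0 := by positivity
      field_simp
    rw [h1, h2, h4, zero_add]
  have hPApos : 0 < P A := by
    rw [hPA]; exact ENNReal.ofReal_pos.2 (by positivity)
  refine ⟨hPApos, ?_⟩
  have hJA : ∀ j : ℕ, k' + 1 ≤ j → Jw [j + 1] ⊆ A := by
    intro j hj
    have he : j + 1 = k' + 2 + (j - (k' + 1)) := by omega
    rw [he]
    exact Set.subset_iUnion (fun i => Jw [k' + 2 + i]) (j - (k' + 1))
  set f : ℝ → ℝ := A.indicator (fun x => x) with hfdef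
  have hfm : Measurable f := measurable_id.indicator hA_meas
  have hfi : Integrable f P := by
    apply (integrable_const (1:ℝ)).mono' hfm.aestronglyMeasurable
    filter_upwards with x
    by_cases hx : x ∈ A
    · rw [hfdef, Set.indicator_of_mem hx]
      have h := hA_sub hx
      rw [Real.norm_eq_abs, abs_le]
      exact ⟨by linarith [h.1], h.2⟩
    · rw [hfdef, Set.indicator_of_notMem hx]; simp
  have key := integral_invariant P hinv hfm hfi
  have hint_eq : ∫ x in A, x ∂P = ∫ x, f x ∂P := (integral_indicator hA_meas).symm
  have hE : ∫ x, x ∂P = 4/7 := E_eq P hsupp hinv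
  have hI1 : ∀ j : ℕ, k' + 1 ≤ j →
      ∫ x, f (S (j+1) x) ∂P = 1/2^(j+2) * (4/7) + (1 - 1/2^j) := by
    intro j hj
    have hae : ∀ᵐ x ∂P, f (S (j+1) x) = S (j+1) x := by
      filter_upwards [ae_mem_Icc P hsupp] with x hx
      exact Set.indicator_of_mem (hJA j hj (mem_Jw_of_mem _ hx)) _
    rw [integral_congr_ae hae, integral_S P hsupp j, hE]
  have hI0 : ∀ j : ℕ, j ≤ k' → ∫ x, f (S (j+1) x) ∂P = 0 := by
    intro j hj
    have hae : ∀ᵐ x ∂P, f (S (j+1) x) = 0 := by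
      filter_upwards [ae_mem_Icc P hsupp] with x hx
      apply Set.indicator_of_notMem
      intro hmem
      obtain ⟨i, hi⟩ := Set.mem_iUnion.1 hmem
      rw [hJ_eq i] at hi
      exact (Jw_disj (show j < k' + 1 + i by omega)).le_bot ⟨mem_Jw_of_mem _ hx, hi⟩
    rw [integral_congr_ae hae, integral_zero]
  set G : ℕ → ℝ := fun j => p (j+1) * ∫ x, f (S (j+1) x) ∂P with hG
  set c2 : ℝ := 3/2^(k'+3) with hc2
  set c1 : ℝ := 3/2^(k'+3) * ((4/7)/2^(k'+3) - 1/2^(k'+1)) with hc1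
  have hGform : ∀ i : ℕ, G (i + (k'+1)) = c1 * (1/4:ℝ)^i + c2 * (1/2:ℝ)^i := by
    intro i
    rw [hG]
    simp only
    rw [hI1 _ (by omega)]
    unfold p
    rw [if_neg (by omega)]
    have e4 : (1/4:ℝ)^i = (1/2:ℝ)^i * (1/2:ℝ)^i := by rw [← mul_pow]; norm_num
    have h2i : ((1:ℝ)/2)^i = 1/2^i := by rw [one_div, inv_pow, one_div]
    have e1 : (2:ℝ) ^ (i + (k'+1) + 1 + 1) = 2^i * 2^(k'+3) := by
      rw [← pow_add]; congr 1
    have e3 : (2:ℝ) ^ (i + (k'+1)) = 2^i * 2^(k'+1) := by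
      rw [← pow_add]
    rw [e1, e3, e4, h2i, hc1, hc2]
    have hne1 : (2:ℝ)^i ≠ 0 := by positivity
    have hne2 : (2:ℝ)^(k'+3) ≠ 0 := by positivity
    have hne3 : (2:ℝ)^(k'+1) ≠ 0 := by positivity
    field_simp
    ring
  have hGsum : Summable G := by
    apply (summable_nat_add_iff (k'+1)).mp
    rw [show (fun n => G (n + (k'+1))) = fun n =>
      c1 * (1/4:ℝ)^n + c2 * (1/2:ℝ)^n from funext hGform]
    exact (hgeom4.mul_left _).add (hgeom2.mul_left _)
  have hGhead : ∑ j ∈ Finset.range (k'+1), G j = 0 := by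
    apply Finset.sum_eq_zero
    intro j hj
    rw [hG]
    simp only
    rw [hI0 j (by simpa using Nat.lt_succ_iff.mp (Finset.mem_range.1 hj)), mul_zero]
  have htot : ∑' j, G j = c1 * (4/3) + c2 * 2 := by
    rw [← Summable.sum_add_tsum_nat_add (k'+1) hGsum, hGhead, zero_add, tsum_congr hGform, tsum_lin]
  have hintA : ∫ x in A, x ∂P = c1 * (4/3) + c2 * 2 := by
    rw [hint_eq, key, htot]
  rw [hintA, hPA, ENNReal.toReal_ofReal (by positivity)]
  have e1 : (2:ℝ)^(k'+2) = 2^(k'+1) * 2 := by ring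
  have e3 : (2:ℝ)^(k'+3) = 2^(k'+1) * 4 := by ring
  rw [hc1, hc2, e1, e3]
  have hne : (2:ℝ)^(k'+1) ≠ 0 := by positivity
  field_simp
  ring
end
end

section
/- For every real number a with 1/2 ≤ a < 5/8, the two-point distortion on J_2 = S_2([0,1]) = [1/2, 5/8] satisfies ∫_{J_2} min((x−a)², (x−5/8)²) dP(x) ≥ 2403/10465280, and equality holds if and only if a = 11/20 (the conditional expectation of P on J_{21} ∪ J_{22}). -/
open MeasureTheory

noncomputable section

-- auxiliary lemmas for stmt_9
lemma aux_measurable_S (j : ℕ) : Measurable (S j) := by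
  unfold S; fun_prop

lemma aux_S1 : S 1 = fun x : ℝ => (1/4) * x + 0 := by
  funext x; simp only [S]; norm_num; try ring

lemma aux_S2 : S 2 = fun x : ℝ => (1/8) * x + 1/2 := by
  funext x; simp only [S]; norm_num; try ring

lemma aux_S3 : S 3 = fun x : ℝ => (1/16) * x + 3/4 := by
  funext x; simp only [S]; norm_num; try ring

lemma aux_halfpow_le {n m : ℕ} (h : n ≤ m) : (1:ℝ)/2^m ≤ 1/2^n := by
  have : (2:ℝ)^n ≤ 2^m := pow_le_pow_right₀ one_le_two h
  have h1 : (0:ℝ) < 2^n := by positivity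
  have h2 : (0:ℝ) < 2^m := by positivity
  exact one_div_le_one_div_of_le h1 this

lemma aux_S_mem (m : ℕ) {x : ℝ} (hx : x ∈ Set.Icc (0:ℝ) 1) :
    1 - 1/2^m ≤ S (m+1) x ∧ S (m+1) x ≤ 1 - (3/4)/2^m := by
  obtain ⟨h0, h1⟩ := hx
  have hp : (0:ℝ) < 2^m := by positivity
  have e : (2:ℝ)^(m+1+1) = 4 * 2^m := by ring
  unfold S
  simp only [Nat.add_sub_cancel]
  rw [e]
  have h4 : (1:ℝ)/(4*2^m) = (1/4)*(1/2^m) := by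
    field_simp
  have h5 : ((3:ℝ)/4)/2^m = (3/4)*(1/2^m) := by ring
  constructor
  · have : 0 ≤ x / (4*2^m) := by positivity
    linarith
  · have hd : x / (4*2^m) ≤ 1/(4*2^m) := by gcongr
    have hpos : 0 < (1:ℝ)/2^m := by positivity
    linarith

-- zone conditions
lemma aux_zc1 : ∀ k, 1 ≤ k → k ≠ 1 → ∀ x ∈ Set.Icc (0:ℝ) 1, S k x ∉ Set.Icc (0:ℝ) (1/4) := by
  intro k hk hne x hx hmem
  obtain ⟨m, rfl⟩ : ∃ m, k = m + 1 := ⟨k-1, by omega⟩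
  obtain ⟨hl, hu⟩ := aux_S_mem m hx
  have hm : 1 ≤ m := by omega
  have h2 : (1:ℝ)/2^m ≤ 1/2 := le_trans (aux_halfpow_le hm) (by norm_num)
  have := hmem.2
  linarith

lemma aux_zc2 : ∀ k, 1 ≤ k → k ≠ 2 → ∀ x ∈ Set.Icc (0:ℝ) 1, S k x ∉ Set.Icc (1/2:ℝ) (5/8) := by
  intro k hk hne x hx hmem
  obtain ⟨m, rfl⟩ : ∃ m, k = m + 1 := ⟨k-1, by omega⟩
  obtain ⟨hl, hu⟩ := aux_S_mem m hx
  match m, hne with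
  | 0, _ =>
    norm_num at hu
    have := hmem.1; linarith
  | (m+2), _ =>
    have h2 : (1:ℝ)/2^(m+2) ≤ 1/4 := le_trans (aux_halfpow_le (n:=2) (by omega)) (by norm_num)
    have := hmem.2; linarith

lemma aux_zc3 : ∀ k, 1 ≤ k → k ≠ 3 → ∀ x ∈ Set.Icc (0:ℝ) 1, S k x ∉ Set.Icc (3/4:ℝ) (13/16) := by
  intro k hk hne x hx hmem
  obtain ⟨m, rfl⟩ : ∃ m, k = m + 1 := ⟨k-1, by omega⟩
  obtain ⟨hl, hu⟩ := aux_S_mem m hx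
  match m, hne with
  | 0, _ =>
    norm_num at hu
    have := hmem.1; linarith
  | 1, _ =>
    norm_num at hu
    have := hmem.1; linarith
  | (m+3), _ =>
    have h2 : (1:ℝ)/2^(m+3) ≤ 1/8 := le_trans (aux_halfpow_le (n:=3) (by omega)) (by norm_num)
    have := hmem.2; linarith

lemma aux_gc1 : ∀ k, 1 ≤ k → ∀ x ∈ Set.Icc (0:ℝ) 1, S k x ∉ Set.Ioo (1/4:ℝ) (1/2) := by
  intro k hk x hx hmem
  obtain ⟨m, rfl⟩ : ∃ m, k = m + 1 := ⟨k-1, by omega⟩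
  obtain ⟨hl, hu⟩ := aux_S_mem m hx
  match m with
  | 0 => norm_num at hu; have := hmem.1; linarith
  | (m+1) =>
    have h2 : (1:ℝ)/2^(m+1) ≤ 1/2 := le_trans (aux_halfpow_le (n:=1) (by omega)) (by norm_num)
    have := hmem.2; linarith

lemma aux_gc2 : ∀ k, 1 ≤ k → ∀ x ∈ Set.Icc (0:ℝ) 1, S k x ∉ Set.Ioo (5/8:ℝ) (3/4) := by
  intro k hk x hx hmem
  obtain ⟨m, rfl⟩ : ∃ m, k = m + 1 := ⟨k-1, by omega⟩
  obtain ⟨hl, hu⟩ := aux_S_mem m hx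
  match m with
  | 0 => norm_num at hu; have := hmem.1; linarith
  | 1 => norm_num at hu; have := hmem.1; linarith
  | (m+2) =>
    have h2 : (1:ℝ)/2^(m+2) ≤ 1/4 := le_trans (aux_halfpow_le (n:=2) (by omega)) (by norm_num)
    have := hmem.2; linarith

lemma aux_gc3 : ∀ k, 1 ≤ k → ∀ x ∈ Set.Icc (0:ℝ) 1, S k x ∉ Set.Ioo (13/16:ℝ) (7/8) := by
  intro k hk x hx hmem
  obtain ⟨m, rfl⟩ : ∃ m, k = m + 1 := ⟨k-1, by omega⟩
  obtain ⟨hl, hu⟩ := aux_S_mem m hx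
  match m with
  | 0 => norm_num at hu; have := hmem.1; linarith
  | 1 => norm_num at hu; have := hmem.1; linarith
  | 2 => norm_num at hu; have := hmem.1; linarith
  | (m+3) =>
    have h2 : (1:ℝ)/2^(m+3) ≤ 1/8 := le_trans (aux_halfpow_le (n:=3) (by omega)) (by norm_num)
    have := hmem.2; linarith

lemma aux_compl_null (P : Measure ℝ) [IsProbabilityMeasure P]
    (hsupp : P (Set.Icc 0 1) = 1) : P (Set.Icc (0:ℝ) 1)ᶜ = 0 := by
  rw [measure_compl measurableSet_Icc (by rw [hsupp]; exact ENNReal.one_ne_top), hsupp,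
    measure_univ, tsub_self]

lemma aux_zone_meas (P : Measure ℝ) [IsProbabilityMeasure P]
    (hsupp : P (Set.Icc 0 1) = 1) (hinv : Invariant P) (j : ℕ) (hj : 1 ≤ j)
    {Z : Set ℝ} (hZ : ∀ k, 1 ≤ k → k ≠ j → ∀ x ∈ Set.Icc (0:ℝ) 1, S k x ∉ Z)
    {B : Set ℝ} (hB : MeasurableSet B) (hBZ : B ⊆ Z) :
    P B = ENNReal.ofReal (p j) * P (S j ⁻¹' B) := by
  obtain ⟨m, rfl⟩ : ∃ m, j = m + 1 := ⟨j-1, by omega⟩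
  rw [hinv B hB]
  refine tsum_eq_single m (fun i hi => ?_)
  have hnull : P (S (i+1) ⁻¹' B) = 0 := by
    refine measure_mono_null (fun x hx => ?_) (aux_compl_null P hsupp)
    simp only [Set.mem_compl_iff]
    intro hxI
    exact hZ (i+1) (by omega) (by omega) x hxI (hBZ hx)
  rw [hnull, mul_zero]

lemma aux_gap_null (P : Measure ℝ) [IsProbabilityMeasure P]
    (hsupp : P (Set.Icc 0 1) = 1) (hinv : Invariant P) {U : Set ℝ} (hU : MeasurableSet U)
    (h : ∀ k, 1 ≤ k → ∀ x ∈ Set.Icc (0:ℝ) 1, S k x ∉ U) : P U = 0 := by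
  rw [hinv U hU]
  refine ENNReal.tsum_eq_zero.mpr fun i => ?_
  have hnull : P (S (i+1) ⁻¹' U) = 0 := by
    refine measure_mono_null (fun x hx => ?_) (aux_compl_null P hsupp)
    simp only [Set.mem_compl_iff]
    intro hxI
    exact h (i+1) (by omega) x hxI hx
  rw [hnull, mul_zero]

lemma aux_tail_meas (P : Measure ℝ) [IsProbabilityMeasure P]
    (hsupp : P (Set.Icc 0 1) = 1) (hinv : Invariant P) {B : Set ℝ}
    (hB : MeasurableSet B) (hBZ : B ⊆ Set.Ici (3/4:ℝ)) :
    P B = ENNReal.ofReal (1/2) * P ((fun z : ℝ => z/2 + 1/2) ⁻¹' B) := by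
  have hTm : Measurable (fun z : ℝ => z/2 + 1/2) := by fun_prop
  have hS1 : ∀ x ∈ Set.Icc (0:ℝ) 1, S 1 x ≤ 1/4 := by
    intro x hx
    have := (aux_S_mem 0 hx).2
    norm_num at this
    linarith
  have hS2 : ∀ x ∈ Set.Icc (0:ℝ) 1, S 2 x ≤ 5/8 := by
    intro x hx
    have := (aux_S_mem 1 hx).2
    norm_num at this
    linarith
  have key : ∀ i : ℕ, ENNReal.ofReal (p (i+1+1+1)) * P (S (i+1+1+1) ⁻¹' B)
      = ENNReal.ofReal (1/2) *
        (ENNReal.ofReal (p (i+1+1)) * P (S (i+1+1) ⁻¹' ((fun z : ℝ => z/2 + 1/2) ⁻¹' B))) := by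
    intro i
    have hps : p (i+1+1+1) = (1/2) * p (i+1+1) := by
      simp only [p, if_neg (by omega : ¬(i+1+1+1 = 1)), if_neg (by omega : ¬(i+1+1 = 1))]
      ring
    have hSS : S (i+1+1+1) ⁻¹' B = S (i+1+1) ⁻¹' ((fun z : ℝ => z/2 + 1/2) ⁻¹' B) := by
      have hfun : (fun z : ℝ => z/2 + 1/2) ∘ S (i+1+1) = S (i+1+1+1) := by
        funext x
        simp only [Function.comp_apply, S, Nat.add_sub_cancel]
        ring
      rw [← Set.preimage_comp, hfun]
    rw [hps, hSS, ENNReal.ofReal_mul (by norm_num), mul_assoc]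
  have h1 := hinv B hB
  have h2 := hinv ((fun z : ℝ => z/2 + 1/2) ⁻¹' B) (hTm hB)
  have f0 : ENNReal.ofReal (p (0+1)) * P (S (0+1) ⁻¹' B) = 0 := by
    have : P (S (0+1) ⁻¹' B) = 0 := by
      refine measure_mono_null (fun x hx => ?_) (aux_compl_null P hsupp)
      simp only [Set.mem_compl_iff]
      intro hxI
      have h1' := hS1 x hxI
      have hge := hBZ hx
      simp only [Set.mem_Ici] at hge
      linarith
    rw [this, mul_zero]
  have f1 : ENNReal.ofReal (p (0+1+1)) * P (S (0+1+1) ⁻¹' B) = 0 := by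
    have : P (S (0+1+1) ⁻¹' B) = 0 := by
      refine measure_mono_null (fun x hx => ?_) (aux_compl_null P hsupp)
      simp only [Set.mem_compl_iff]
      intro hxI
      have h1' := hS2 x hxI
      have hge := hBZ hx
      simp only [Set.mem_Ici] at hge
      linarith
    rw [this, mul_zero]
  have g0 : ENNReal.ofReal (p (0+1)) * P (S (0+1) ⁻¹' ((fun z : ℝ => z/2 + 1/2) ⁻¹' B)) = 0 := by
    have : P (S (0+1) ⁻¹' ((fun z : ℝ => z/2 + 1/2) ⁻¹' B)) = 0 := by
      refine measure_mono_null (fun x hx => ?_) (aux_compl_null P hsupp)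
      simp only [Set.mem_compl_iff]
      intro hxI
      have h1' := hS1 x hxI
      have hge := hBZ hx
      simp only [Set.mem_Ici, Set.mem_preimage] at hge
      linarith
    rw [this, mul_zero]
  rw [tsum_eq_zero_add' ENNReal.summable, tsum_eq_zero_add' ENNReal.summable,
    f0, zero_add, f1, zero_add] at h1
  rw [tsum_eq_zero_add' ENNReal.summable, g0, zero_add] at h2
  rw [h1, h2, ← ENNReal.tsum_mul_left]
  exact tsum_congr key

lemma aux_transport (P : Measure ℝ) [IsProbabilityMeasure P] {c : ℝ} (hc : 0 ≤ c)
    {φ : ℝ → ℝ} (hφ : Measurable φ) {A : Set ℝ} (hA : MeasurableSet A)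
    (hP : ∀ B, MeasurableSet B → B ⊆ A → P B = ENNReal.ofReal c * P (φ ⁻¹' B))
    (f : ℝ → ℝ) (hf : Continuous f) :
    ∫ x in A, f x ∂P = c * ∫ y in φ ⁻¹' A, f (φ y) ∂P := by
  have hres : P.restrict A = (ENNReal.ofReal c) • ((P.map φ).restrict A) := by
    refine Measure.ext fun s hs => ?_
    rw [Measure.restrict_apply hs, Measure.smul_apply, smul_eq_mul, Measure.restrict_apply hs,
      Measure.map_apply hφ (hs.inter hA)]
    exact hP (s ∩ A) (hs.inter hA) Set.inter_subset_right
  calc ∫ x in A, f x ∂P = ∫ x, f x ∂((ENNReal.ofReal c) • ((P.map φ).restrict A)) := by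
        rw [← hres]
    _ = c * ∫ x, f x ∂((P.map φ).restrict A) := by
        rw [integral_smul_measure, ENNReal.toReal_ofReal hc, smul_eq_mul]
    _ = c * ∫ x, f x ∂((P.restrict (φ ⁻¹' A)).map φ) := by
        rw [Measure.restrict_map hφ hA]
    _ = c * ∫ y in φ ⁻¹' A, f (φ y) ∂P := by
        rw [integral_map hφ.aemeasurable hf.aestronglyMeasurable]

lemma aux_p_nonneg (j : ℕ) : 0 ≤ p j := by
  unfold p; split <;> positivity

lemma aux_zone_int (P : Measure ℝ) [IsProbabilityMeasure P]
    (hsupp : P (Set.Icc 0 1) = 1) (hinv : Invariant P) (j : ℕ) (hj : 1 ≤ j)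
    {Z : Set ℝ} (hZ : ∀ k, 1 ≤ k → k ≠ j → ∀ x ∈ Set.Icc (0:ℝ) 1, S k x ∉ Z)
    {A : Set ℝ} (hA : MeasurableSet A) (hAZ : A ⊆ Z) (f : ℝ → ℝ) (hf : Continuous f) :
    ∫ x in A, f x ∂P = p j * ∫ y in S j ⁻¹' A, f (S j y) ∂P :=
  aux_transport P (aux_p_nonneg j) (aux_measurable_S j) hA
    (fun B hB hBA => aux_zone_meas P hsupp hinv j hj hZ hB (hBA.trans hAZ)) f hf

lemma aux_tail_int (P : Measure ℝ) [IsProbabilityMeasure P]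
    (hsupp : P (Set.Icc 0 1) = 1) (hinv : Invariant P)
    {A : Set ℝ} (hA : MeasurableSet A) (hAZ : A ⊆ Set.Ici (3/4:ℝ)) (f : ℝ → ℝ)
    (hf : Continuous f) :
    ∫ x in A, f x ∂P = (1/2) * ∫ y in (fun z : ℝ => z/2 + 1/2) ⁻¹' A, f (y/2 + 1/2) ∂P :=
  aux_transport P (by norm_num) (by fun_prop) hA
    (fun B hB hBA => aux_tail_meas P hsupp hinv hB (hBA.trans hAZ)) f hf

lemma aux_intOn (P : Measure ℝ) [IsProbabilityMeasure P] {f : ℝ → ℝ} (hf : Continuous f)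
    (u v : ℝ) : IntegrableOn f (Set.Icc u v) P :=
  hf.continuousOn.integrableOn_compact isCompact_Icc

lemma aux_int_affine1 (P : Measure ℝ) [IsProbabilityMeasure P] (u v α β : ℝ) :
    ∫ x in Set.Icc u v, (α*x + β) ∂P
      = α * (∫ x in Set.Icc u v, x ∂P) + β * (∫ x in Set.Icc u v, (1:ℝ) ∂P) := by
  have e : (fun x : ℝ => α*x + β) = fun x : ℝ => α * x + β * 1 := funext fun x => by ring
  rw [e, integral_add (aux_intOn P (by fun_prop) u v) (aux_intOn P (by fun_prop) u v),
    integral_const_mul, integral_const_mul]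

lemma aux_int_affine2 (P : Measure ℝ) [IsProbabilityMeasure P] (u v α β : ℝ) :
    ∫ x in Set.Icc u v, (α*x + β)^2 ∂P
      = α^2 * (∫ x in Set.Icc u v, x^2 ∂P) + (2*α*β) * (∫ x in Set.Icc u v, x ∂P)
        + β^2 * (∫ x in Set.Icc u v, (1:ℝ) ∂P) := by
  have e : (fun x : ℝ => (α*x + β)^2)
      = fun x : ℝ => α^2 * x^2 + ((2*α*β) * x + β^2 * 1) := funext fun x => by ring
  rw [e, integral_add (aux_intOn P (by fun_prop) u v) (aux_intOn P (by fun_prop) u v),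
    integral_add (aux_intOn P (by fun_prop) u v) (aux_intOn P (by fun_prop) u v),
    integral_const_mul, integral_const_mul, integral_const_mul]
  ring

lemma aux_one (P : Measure ℝ) [IsProbabilityMeasure P] (hsupp : P (Set.Icc 0 1) = 1) :
    ∫ x in Set.Icc (0:ℝ) 1, (1:ℝ) ∂P = 1 := by
  rw [setIntegral_const, measureReal_def, hsupp]
  norm_num

lemma aux_split3 (P : Measure ℝ) [IsProbabilityMeasure P] {f : ℝ → ℝ} (hf : Continuous f)
    {c1 c2 c3 c4 : ℝ} (h12 : c1 ≤ c2) (h23 : c2 < c3) (h34 : c3 ≤ c4)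
    (hnull : P (Set.Ioo c2 c3) = 0) :
    ∫ x in Set.Icc c1 c4, f x ∂P
      = ∫ x in Set.Icc c1 c2, f x ∂P + ∫ x in Set.Icc c3 c4, f x ∂P := by
  have hset : Set.Icc c1 c4 = Set.Icc c1 c2 ∪ (Set.Ioo c2 c3 ∪ Set.Icc c3 c4) := by
    ext x
    simp only [Set.mem_Icc, Set.mem_union, Set.mem_Ioo]
    constructor
    · rintro ⟨hx1, hx4⟩
      rcases le_or_gt x c2 with h | h
      · exact Or.inl ⟨hx1, h⟩
      · rcases lt_or_ge x c3 with h' | h'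
        · exact Or.inr (Or.inl ⟨h, h'⟩)
        · exact Or.inr (Or.inr ⟨h', hx4⟩)
    · rintro (⟨hx1, hx2⟩ | ⟨hx2, hx3⟩ | ⟨hx3, hx4⟩) <;> constructor <;> linarith
  have hd1 : Disjoint (Set.Icc c1 c2) (Set.Ioo c2 c3 ∪ Set.Icc c3 c4) := by
    rw [Set.disjoint_left]
    rintro x ⟨_, hx2⟩ (⟨h, _⟩ | ⟨h, _⟩) <;> linarith
  have hd2 : Disjoint (Set.Ioo c2 c3) (Set.Icc c3 c4) := by
    rw [Set.disjoint_left]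
    rintro x ⟨_, hx3⟩ ⟨h, _⟩
    linarith
  have hmid : ∫ x in Set.Ioo c2 c3, f x ∂P = 0 := by
    rw [Measure.restrict_eq_zero.mpr hnull, integral_zero_measure]
  rw [hset, setIntegral_union hd1 (measurableSet_Ioo.union measurableSet_Icc)
      (aux_intOn P hf c1 c2)
      (((aux_intOn P hf c2 c3).mono_set Set.Ioo_subset_Icc_self).union (aux_intOn P hf c3 c4)),
    setIntegral_union hd2 measurableSet_Icc
      ((aux_intOn P hf c2 c3).mono_set Set.Ioo_subset_Icc_self) (aux_intOn P hf c3 c4),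
    hmid, zero_add]

lemma aux_pre1_Icc (u v : ℝ) : S 1 ⁻¹' Set.Icc u v = Set.Icc (4*u) (4*v) := by
  ext x
  simp only [Set.mem_preimage, aux_S1, Set.mem_Icc]
  constructor <;> rintro ⟨hh1, hh2⟩ <;> exact ⟨by linarith, by linarith⟩

lemma aux_pre2_Icc (u v : ℝ) : S 2 ⁻¹' Set.Icc u v = Set.Icc (8*u - 4) (8*v - 4) := by
  ext x
  simp only [Set.mem_preimage, aux_S2, Set.mem_Icc]
  constructor <;> rintro ⟨hh1, hh2⟩ <;> exact ⟨by linarith, by linarith⟩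

lemma aux_pre2_Ioo (u v : ℝ) : S 2 ⁻¹' Set.Ioo u v = Set.Ioo (8*u - 4) (8*v - 4) := by
  ext x
  simp only [Set.mem_preimage, aux_S2, Set.mem_Ioo]
  constructor <;> rintro ⟨hh1, hh2⟩ <;> exact ⟨by linarith, by linarith⟩

lemma aux_pre3_Icc (u v : ℝ) : S 3 ⁻¹' Set.Icc u v = Set.Icc (16*u - 12) (16*v - 12) := by
  ext x
  simp only [Set.mem_preimage, aux_S3, Set.mem_Icc]
  constructor <;> rintro ⟨hh1, hh2⟩ <;> exact ⟨by linarith, by linarith⟩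

lemma aux_preT_Icc (u v : ℝ) :
    (fun z : ℝ => z/2 + 1/2) ⁻¹' Set.Icc u v = Set.Icc (2*u - 1) (2*v - 1) := by
  ext x
  simp only [Set.mem_preimage, Set.mem_Icc]
  constructor <;> rintro ⟨hh1, hh2⟩ <;> exact ⟨by linarith, by linarith⟩

set_option maxHeartbeats 2000000 in
lemma aux_moments (P : Measure ℝ) [IsProbabilityMeasure P]
    (hsupp : P (Set.Icc 0 1) = 1) (hinv : Invariant P) :
    (∫ x in Set.Icc (0:ℝ) (5/8), (1:ℝ) ∂P = 5/8) ∧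
    (∫ x in Set.Icc (0:ℝ) (5/8), x ∂P = 1/4) ∧
    (∫ x in Set.Icc (0:ℝ) (5/8), x^2 ∂P = 151/1168) ∧
    (∫ x in Set.Icc (3/4:ℝ) 1, (1:ℝ) ∂P = 3/8) ∧
    (∫ x in Set.Icc (3/4:ℝ) 1, x ∂P = 9/28) ∧
    (∫ x in Set.Icc (3/4:ℝ) 1, x^2 ∂P = 2271/8176) ∧
    (∫ x in Set.Icc (1/2:ℝ) (5/8), (1:ℝ) ∂P = 3/8) ∧
    (∫ x in Set.Icc (1/2:ℝ) (5/8), x ∂P = 3/14) ∧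
    (∫ x in Set.Icc (1/2:ℝ) (5/8), x^2 ∂P = 1005/8176) ∧
    (∫ x in Set.Icc (3/4:ℝ) (13/16), (1:ℝ) ∂P = 3/16) ∧
    (∫ x in Set.Icc (3/4:ℝ) (13/16), x ∂P = 33/224) ∧
    (∫ x in Set.Icc (3/4:ℝ) (13/16), x^2 ∂P = 7575/65408) := by
  have hp1 : p 1 = 1/4 := by norm_num [p]
  have hp2 : p 2 = 3/8 := by norm_num [p]
  have hp3 : p 3 = 3/16 := by norm_num [p]
  have hg0 := aux_one P hsupp
  -- gap null sets
  have hn1 : P (Set.Ioo (1/4:ℝ) (1/2)) = 0 :=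
    aux_gap_null P hsupp hinv measurableSet_Ioo aux_gc1
  have hn2 : P (Set.Ioo (5/8:ℝ) (3/4)) = 0 :=
    aux_gap_null P hsupp hinv measurableSet_Ioo aux_gc2
  -- preimage identities
  have hpre1 : S 1 ⁻¹' Set.Icc (0:ℝ) (1/4) = Set.Icc (0:ℝ) 1 := by
    rw [aux_pre1_Icc]; norm_num
  have hpre2 : S 2 ⁻¹' Set.Icc (1/2:ℝ) (5/8) = Set.Icc (0:ℝ) 1 := by
    rw [aux_pre2_Icc]; norm_num
  have hpre3 : S 3 ⁻¹' Set.Icc (3/4:ℝ) (13/16) = Set.Icc (0:ℝ) 1 := by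
    rw [aux_pre3_Icc]; norm_num
  have hpreT : (fun z : ℝ => z/2 + 1/2) ⁻¹' Set.Icc (3/4:ℝ) 1 = Set.Icc (1/2:ℝ) 1 := by
    rw [aux_preT_Icc]; norm_num
  have hsubT : Set.Icc (3/4:ℝ) 1 ⊆ Set.Ici (3/4:ℝ) := fun x hx => hx.1
  -- B family (over [0,1/4], via S 1)
  have eB0 : ∫ x in Set.Icc (0:ℝ) (1/4), (1:ℝ) ∂P
      = p 1 * ∫ y in S 1 ⁻¹' Set.Icc (0:ℝ) (1/4), (1:ℝ) ∂P :=
    aux_zone_int P hsupp hinv 1 le_rfl aux_zc1 measurableSet_Icc (subset_refl _)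
      (fun _ => 1) continuous_const
  rw [hpre1, hp1, hg0] at eB0
  have eB1 : ∫ x in Set.Icc (0:ℝ) (1/4), x ∂P
      = p 1 * ∫ y in S 1 ⁻¹' Set.Icc (0:ℝ) (1/4), S 1 y ∂P :=
    aux_zone_int P hsupp hinv 1 le_rfl aux_zc1 measurableSet_Icc (subset_refl _)
      (fun x => x) continuous_id
  rw [hpre1, hp1] at eB1
  simp only [aux_S1] at eB1
  rw [aux_int_affine1 P, hg0] at eB1
  have eB2 : ∫ x in Set.Icc (0:ℝ) (1/4), x^2 ∂P
      = p 1 * ∫ y in S 1 ⁻¹' Set.Icc (0:ℝ) (1/4), (S 1 y)^2 ∂P :=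
    aux_zone_int P hsupp hinv 1 le_rfl aux_zc1 measurableSet_Icc (subset_refl _)
      (fun x => x^2) (by fun_prop)
  rw [hpre1, hp1] at eB2
  simp only [aux_S1] at eB2
  rw [aux_int_affine2 P, hg0] at eB2
  -- C family (over [1/2,5/8], via S 2)
  have eC0 : ∫ x in Set.Icc (1/2:ℝ) (5/8), (1:ℝ) ∂P
      = p 2 * ∫ y in S 2 ⁻¹' Set.Icc (1/2:ℝ) (5/8), (1:ℝ) ∂P :=
    aux_zone_int P hsupp hinv 2 (by norm_num) aux_zc2 measurableSet_Icc (subset_refl _)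
      (fun _ => 1) continuous_const
  rw [hpre2, hp2, hg0] at eC0
  have eC1 : ∫ x in Set.Icc (1/2:ℝ) (5/8), x ∂P
      = p 2 * ∫ y in S 2 ⁻¹' Set.Icc (1/2:ℝ) (5/8), S 2 y ∂P :=
    aux_zone_int P hsupp hinv 2 (by norm_num) aux_zc2 measurableSet_Icc (subset_refl _)
      (fun x => x) continuous_id
  rw [hpre2, hp2] at eC1
  simp only [aux_S2] at eC1
  rw [aux_int_affine1 P, hg0] at eC1
  have eC2 : ∫ x in Set.Icc (1/2:ℝ) (5/8), x^2 ∂P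
      = p 2 * ∫ y in S 2 ⁻¹' Set.Icc (1/2:ℝ) (5/8), (S 2 y)^2 ∂P :=
    aux_zone_int P hsupp hinv 2 (by norm_num) aux_zc2 measurableSet_Icc (subset_refl _)
      (fun x => x^2) (by fun_prop)
  rw [hpre2, hp2] at eC2
  simp only [aux_S2] at eC2
  rw [aux_int_affine2 P, hg0] at eC2
  -- W family (over [3/4,13/16], via S 3)
  have eW0 : ∫ x in Set.Icc (3/4:ℝ) (13/16), (1:ℝ) ∂P
      = p 3 * ∫ y in S 3 ⁻¹' Set.Icc (3/4:ℝ) (13/16), (1:ℝ) ∂P :=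
    aux_zone_int P hsupp hinv 3 (by norm_num) aux_zc3 measurableSet_Icc (subset_refl _)
      (fun _ => 1) continuous_const
  rw [hpre3, hp3, hg0] at eW0
  have eW1 : ∫ x in Set.Icc (3/4:ℝ) (13/16), x ∂P
      = p 3 * ∫ y in S 3 ⁻¹' Set.Icc (3/4:ℝ) (13/16), S 3 y ∂P :=
    aux_zone_int P hsupp hinv 3 (by norm_num) aux_zc3 measurableSet_Icc (subset_refl _)
      (fun x => x) continuous_id
  rw [hpre3, hp3] at eW1
  simp only [aux_S3] at eW1
  rw [aux_int_affine1 P, hg0] at eW1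
  have eW2 : ∫ x in Set.Icc (3/4:ℝ) (13/16), x^2 ∂P
      = p 3 * ∫ y in S 3 ⁻¹' Set.Icc (3/4:ℝ) (13/16), (S 3 y)^2 ∂P :=
    aux_zone_int P hsupp hinv 3 (by norm_num) aux_zc3 measurableSet_Icc (subset_refl _)
      (fun x => x^2) (by fun_prop)
  rw [hpre3, hp3] at eW2
  simp only [aux_S3] at eW2
  rw [aux_int_affine2 P, hg0] at eW2
  -- H family (over [3/4,1], via tail map)
  have eH0 : ∫ x in Set.Icc (3/4:ℝ) 1, (1:ℝ) ∂P
      = (1/2) * ∫ y in (fun z : ℝ => z/2 + 1/2) ⁻¹' Set.Icc (3/4:ℝ) 1, (1:ℝ) ∂P :=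
    aux_tail_int P hsupp hinv measurableSet_Icc hsubT (fun _ => 1) continuous_const
  rw [hpreT] at eH0
  have eH1 : ∫ x in Set.Icc (3/4:ℝ) 1, x ∂P
      = (1/2) * ∫ y in (fun z : ℝ => z/2 + 1/2) ⁻¹' Set.Icc (3/4:ℝ) 1, (y/2 + 1/2) ∂P :=
    aux_tail_int P hsupp hinv measurableSet_Icc hsubT (fun x => x) continuous_id
  rw [hpreT] at eH1
  rw [show (fun y : ℝ => y/2 + 1/2) = fun y : ℝ => (1/2)*y + 1/2 from
    funext fun y => by ring] at eH1
  rw [aux_int_affine1 P] at eH1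
  have eH2 : ∫ x in Set.Icc (3/4:ℝ) 1, x^2 ∂P
      = (1/2) * ∫ y in (fun z : ℝ => z/2 + 1/2) ⁻¹' Set.Icc (3/4:ℝ) 1, (y/2 + 1/2)^2 ∂P :=
    aux_tail_int P hsupp hinv measurableSet_Icc hsubT (fun x => x^2) (by fun_prop)
  rw [hpreT] at eH2
  rw [show (fun y : ℝ => (y/2 + 1/2)^2) = fun y : ℝ => ((1/2)*y + 1/2)^2 from
    funext fun y => by ring] at eH2
  rw [aux_int_affine2 P] at eH2
  -- splittings
  have eg0 := aux_split3 P (f := fun _ => (1:ℝ)) continuous_const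
    (by norm_num : (0:ℝ) ≤ 1/4) (by norm_num : (1/4:ℝ) < 1/2) (by norm_num : (1/2:ℝ) ≤ 1) hn1
  have eg1 := aux_split3 P (f := fun x : ℝ => x) continuous_id
    (by norm_num : (0:ℝ) ≤ 1/4) (by norm_num : (1/4:ℝ) < 1/2) (by norm_num : (1/2:ℝ) ≤ 1) hn1
  have eg2 := aux_split3 P (f := fun x : ℝ => x^2) (by fun_prop)
    (by norm_num : (0:ℝ) ≤ 1/4) (by norm_num : (1/4:ℝ) < 1/2) (by norm_num : (1/2:ℝ) ≤ 1) hn1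
  have ek0 := aux_split3 P (f := fun _ => (1:ℝ)) continuous_const
    (by norm_num : (1/2:ℝ) ≤ 5/8) (by norm_num : (5/8:ℝ) < 3/4) (by norm_num : (3/4:ℝ) ≤ 1) hn2
  have ek1 := aux_split3 P (f := fun x : ℝ => x) continuous_id
    (by norm_num : (1/2:ℝ) ≤ 5/8) (by norm_num : (5/8:ℝ) < 3/4) (by norm_num : (3/4:ℝ) ≤ 1) hn2
  have ek2 := aux_split3 P (f := fun x : ℝ => x^2) (by fun_prop)
    (by norm_num : (1/2:ℝ) ≤ 5/8) (by norm_num : (5/8:ℝ) < 3/4) (by norm_num : (3/4:ℝ) ≤ 1) hn2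
  have eN0 := aux_split3 P (f := fun _ => (1:ℝ)) continuous_const
    (by norm_num : (0:ℝ) ≤ 1/4) (by norm_num : (1/4:ℝ) < 1/2) (by norm_num : (1/2:ℝ) ≤ 5/8) hn1
  have eN1 := aux_split3 P (f := fun x : ℝ => x) continuous_id
    (by norm_num : (0:ℝ) ≤ 1/4) (by norm_num : (1/4:ℝ) < 1/2) (by norm_num : (1/2:ℝ) ≤ 5/8) hn1
  have eN2 := aux_split3 P (f := fun x : ℝ => x^2) (by fun_prop)
    (by norm_num : (0:ℝ) ≤ 1/4) (by norm_num : (1/4:ℝ) < 1/2) (by norm_num : (1/2:ℝ) ≤ 5/8) hn1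
  rw [hg0] at eg0
  -- solve the linear system
  have hk0 : ∫ x in Set.Icc (1/2:ℝ) 1, (1:ℝ) ∂P = 3/4 := by linarith only [ek0, eC0, eH0]
  have hc0 : ∫ x in Set.Icc (1/2:ℝ) (5/8), (1:ℝ) ∂P = 3/8 := by linarith only [eC0]
  have hh0 : ∫ x in Set.Icc (3/4:ℝ) 1, (1:ℝ) ∂P = 3/8 := by linarith only [eH0, hk0]
  rw [hk0] at eH1 eH2
  have hg1 : ∫ x in Set.Icc (0:ℝ) 1, x ∂P = 4/7 := by linarith only [eg1, eB1, ek1, eC1, eH1]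
  rw [hg1] at eB1 eC1 eW1 eB2 eC2 eW2
  have hk1 : ∫ x in Set.Icc (1/2:ℝ) 1, x ∂P = 15/28 := by linarith only [ek1, eC1, eH1]
  rw [hk1] at eH2
  have hc1 : ∫ x in Set.Icc (1/2:ℝ) (5/8), x ∂P = 3/14 := by linarith only [eC1]
  have hh1 : ∫ x in Set.Icc (3/4:ℝ) 1, x ∂P = 9/28 := by linarith only [eH1, hk1]
  have hg2 : ∫ x in Set.Icc (0:ℝ) 1, x^2 ∂P = 208/511 := by linarith only [eg2, eB2, ek2, eC2, eH2]
  rw [hg2] at eB2 eC2 eW2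
  have hk2 : ∫ x in Set.Icc (1/2:ℝ) 1, x^2 ∂P = 117/292 := by linarith only [ek2, eC2, eH2, hg2]
  have hc2 : ∫ x in Set.Icc (1/2:ℝ) (5/8), x^2 ∂P = 1005/8176 := by linarith only [eC2, hg2]
  have hh2 : ∫ x in Set.Icc (3/4:ℝ) 1, x^2 ∂P = 2271/8176 := by linarith only [eH2, hk2]
  have hb1 : ∫ x in Set.Icc (0:ℝ) (1/4), x ∂P = 1/28 := by linarith only [eB1, hg1]
  have hb2 : ∫ x in Set.Icc (0:ℝ) (1/4), x^2 ∂P = 13/2044 := by linarith only [eB2, hg2]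
  have hw0 : ∫ x in Set.Icc (3/4:ℝ) (13/16), (1:ℝ) ∂P = 3/16 := by linarith only [eW0]
  have hw1 : ∫ x in Set.Icc (3/4:ℝ) (13/16), x ∂P = 33/224 := by linarith only [eW1]
  have hw2 : ∫ x in Set.Icc (3/4:ℝ) (13/16), x^2 ∂P = 7575/65408 := by linarith only [eW2]
  refine ⟨by linarith only [eN0, eB0, hc0], by linarith only [eN1, hb1, hc1], by linarith only [eN2, hb2, hc2], hh0, hh1, hh2, hc0, hc1, hc2, hw0, hw1, hw2⟩

set_option maxHeartbeats 2000000 in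
/-- For `1/2 ≤ a < 5/8`, the two-point distortion on `J₂` with the points `a` and `5/8`
is at least `2403/10465280`, with equality iff `a = 11/20`. -/
theorem stmt_9 (P : Measure ℝ) [IsProbabilityMeasure P]
    (hsupp : P (Set.Icc 0 1) = 1) (hinv : Invariant P)
    (a : ℝ) (h1 : 1 / 2 ≤ a) (h2 : a < 5 / 8) :
    2403 / 10465280 ≤ ∫ x in Jw [2], min ((x - a) ^ 2) ((x - 5 / 8) ^ 2) ∂P ∧
    ((∫ x in Jw [2], min ((x - a) ^ 2) ((x - 5 / 8) ^ 2) ∂P) = 2403 / 10465280 ↔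
      a = 11 / 20) := by
  obtain ⟨hN0, hN1, hN2, hH0, hH1, hH2, hC0, hC1, hC2, hW0, hW1, hW2⟩ :=
    aux_moments P hsupp hinv
  have hp2 : p 2 = 3/8 := by norm_num [p]
  -- null gaps at level 2
  have hn2 : P (Set.Ioo (5/8:ℝ) (3/4)) = 0 :=
    aux_gap_null P hsupp hinv measurableSet_Ioo aux_gc2
  have hn3 : P (Set.Ioo (13/16:ℝ) (7/8)) = 0 :=
    aux_gap_null P hsupp hinv measurableSet_Ioo aux_gc3
  have hg4 : P (Set.Ioo (37/64:ℝ) (19/32)) = 0 := by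
    have hh := aux_zone_meas P hsupp hinv 2 (by norm_num) aux_zc2
      (measurableSet_Ioo (a := (37/64:ℝ)) (b := (19/32:ℝ)))
      (fun x hx => ⟨by linarith [hx.1], by linarith [hx.2]⟩ :
        Set.Ioo (37/64:ℝ) (19/32) ⊆ Set.Icc (1/2:ℝ) (5/8))
    rw [hh, show S 2 ⁻¹' Set.Ioo (37/64:ℝ) (19/32) = Set.Ioo (5/8:ℝ) (3/4) from by
      rw [aux_pre2_Ioo]; norm_num, hn2, mul_zero]
  have hg5 : P (Set.Ioo (77/128:ℝ) (39/64)) = 0 := by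
    have hh := aux_zone_meas P hsupp hinv 2 (by norm_num) aux_zc2
      (measurableSet_Ioo (a := (77/128:ℝ)) (b := (39/64:ℝ)))
      (fun x hx => ⟨by linarith [hx.1], by linarith [hx.2]⟩ :
        Set.Ioo (77/128:ℝ) (39/64) ⊆ Set.Icc (1/2:ℝ) (5/8))
    rw [hh, show S 2 ⁻¹' Set.Ioo (77/128:ℝ) (39/64) = Set.Ioo (13/16:ℝ) (7/8) from by
      rw [aux_pre2_Ioo]; norm_num, hn3, mul_zero]
  -- J_2 as an interval
  have hJw : Jw [2] = Set.Icc (1/2:ℝ) (5/8) := by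
    ext z
    simp only [Jw, Sw, List.foldr, Set.mem_image, Set.mem_Icc, Function.comp, id, aux_S2]
    constructor
    · rintro ⟨x, ⟨hx0, hx1⟩, rfl⟩
      constructor <;> linarith
    · rintro ⟨hz1, hz2⟩
      exact ⟨8*z - 4, ⟨by linarith, by linarith⟩, by ring⟩
  -- fixed quadratic integrals
  have hQ : ∀ t : ℝ, ∫ x in Set.Icc (1/2:ℝ) (37/64), (x - t)^2 ∂P
      = (15/64)*t^2 - (33/128)*t + 42501/598016 := by
    intro t
    have hh := aux_zone_int P hsupp hinv 2 (by norm_num) aux_zc2 measurableSet_Icc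
      ((Set.Icc_subset_Icc le_rfl (by norm_num)) :
        Set.Icc (1/2:ℝ) (37/64) ⊆ Set.Icc (1/2:ℝ) (5/8)) (fun x => (x - t)^2) (by fun_prop)
    rw [show S 2 ⁻¹' Set.Icc (1/2:ℝ) (37/64) = Set.Icc (0:ℝ) (5/8) from by
      rw [aux_pre2_Icc]; norm_num, hp2] at hh
    simp only [aux_S2] at hh
    rw [show (fun y : ℝ => ((1/8)*y + 1/2 - t)^2) = fun y : ℝ => ((1/8)*y + (1/2 - t))^2 from
      funext fun y => by ring, aux_int_affine2 P, hN0, hN1, hN2] at hh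
    rw [hh]; ring
  have hD : ∫ x in Set.Icc (19/32:ℝ) (5/8), (x - 5/8)^2 ∂P = 243/4186112 := by
    have hh := aux_zone_int P hsupp hinv 2 (by norm_num) aux_zc2 measurableSet_Icc
      ((Set.Icc_subset_Icc (by norm_num) le_rfl) :
        Set.Icc (19/32:ℝ) (5/8) ⊆ Set.Icc (1/2:ℝ) (5/8)) (fun x => (x - 5/8)^2) (by fun_prop)
    rw [show S 2 ⁻¹' Set.Icc (19/32:ℝ) (5/8) = Set.Icc (3/4:ℝ) 1 from by
      rw [aux_pre2_Icc]; norm_num, hp2] at hh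
    simp only [aux_S2] at hh
    rw [show (fun y : ℝ => ((1/8)*y + 1/2 - 5/8)^2) = fun y : ℝ => ((1/8)*y + (-1/8))^2 from
      funext fun y => by ring, aux_int_affine2 P, hH0, hH1, hH2] at hh
    rw [hh]; norm_num
  have hEJ22 : ∫ x in Set.Icc (9/16:ℝ) (37/64), (x - 17/32)^2 ∂P = 7695/33488896 := by
    have hh := aux_zone_int P hsupp hinv 2 (by norm_num) aux_zc2 measurableSet_Icc
      ((Set.Icc_subset_Icc (by norm_num) (by norm_num)) :
        Set.Icc (9/16:ℝ) (37/64) ⊆ Set.Icc (1/2:ℝ) (5/8)) (fun x => (x - 17/32)^2) (by fun_prop)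
    rw [show S 2 ⁻¹' Set.Icc (9/16:ℝ) (37/64) = Set.Icc (1/2:ℝ) (5/8) from by
      rw [aux_pre2_Icc]; norm_num, hp2] at hh
    simp only [aux_S2] at hh
    rw [show (fun y : ℝ => ((1/8)*y + 1/2 - 17/32)^2) = fun y : ℝ => ((1/8)*y + (-1/32))^2 from
      funext fun y => by ring, aux_int_affine2 P, hC0, hC1, hC2] at hh
    rw [hh]; norm_num
  have hE23 : ∫ x in Set.Icc (19/32:ℝ) (77/128), (x - 37/64)^2 ∂P = 7695/267911168 := by
    have hh := aux_zone_int P hsupp hinv 2 (by norm_num) aux_zc2 measurableSet_Icc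
      ((Set.Icc_subset_Icc (by norm_num) (by norm_num)) :
        Set.Icc (19/32:ℝ) (77/128) ⊆ Set.Icc (1/2:ℝ) (5/8)) (fun x => (x - 37/64)^2) (by fun_prop)
    rw [show S 2 ⁻¹' Set.Icc (19/32:ℝ) (77/128) = Set.Icc (3/4:ℝ) (13/16) from by
      rw [aux_pre2_Icc]; norm_num, hp2] at hh
    simp only [aux_S2] at hh
    rw [show (fun y : ℝ => ((1/8)*y + 1/2 - 37/64)^2) = fun y : ℝ => ((1/8)*y + (-5/64))^2 from
      funext fun y => by ring, aux_int_affine2 P, hW0, hW1, hW2] at hh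
    rw [hh]; norm_num
  have hE23' : ∫ x in Set.Icc (19/32:ℝ) (77/128), (x - 5/8)^2 ∂P = 243/4784128 := by
    have hh := aux_zone_int P hsupp hinv 2 (by norm_num) aux_zc2 measurableSet_Icc
      ((Set.Icc_subset_Icc (by norm_num) (by norm_num)) :
        Set.Icc (19/32:ℝ) (77/128) ⊆ Set.Icc (1/2:ℝ) (5/8)) (fun x => (x - 5/8)^2) (by fun_prop)
    rw [show S 2 ⁻¹' Set.Icc (19/32:ℝ) (77/128) = Set.Icc (3/4:ℝ) (13/16) from by
      rw [aux_pre2_Icc]; norm_num, hp2] at hh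
    simp only [aux_S2] at hh
    rw [show (fun y : ℝ => ((1/8)*y + 1/2 - 5/8)^2) = fun y : ℝ => ((1/8)*y + (-1/8))^2 from
      funext fun y => by ring, aux_int_affine2 P, hW0, hW1, hW2] at hh
    rw [hh]; norm_num
  have hBr : ∫ x in Set.Icc (39/64:ℝ) (5/8), (x - 5/8)^2 ∂P
      = 243/4186112 - 243/4784128 := by
    have hh := aux_split3 P (f := fun x : ℝ => (x - 5/8)^2) (by fun_prop)
      (by norm_num : (19/32:ℝ) ≤ 77/128) (by norm_num : (77/128:ℝ) < 39/64)
      (by norm_num : (39/64:ℝ) ≤ 5/8) hg5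
    rw [hD, hE23'] at hh
    linarith
  -- the integrand
  set F : ℝ → ℝ := fun x => min ((x - a)^2) ((x - 5/8)^2) with hF
  have hFc : Continuous F := by
    rw [hF]; fun_prop
  rw [hJw]
  have hsplit : ∫ x in Set.Icc (1/2:ℝ) (5/8), F x ∂P
      = ∫ x in Set.Icc (1/2:ℝ) (37/64), F x ∂P + ∫ x in Set.Icc (19/32:ℝ) (5/8), F x ∂P :=
    aux_split3 P hFc (by norm_num) (by norm_num) (by norm_num) hg4
  by_cases hA1 : a ≤ 17/32
  · -- case α : strict inequality
    have eB : ∫ x in Set.Icc (19/32:ℝ) (5/8), F x ∂P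
        = ∫ x in Set.Icc (19/32:ℝ) (5/8), (x - 5/8)^2 ∂P := by
      refine setIntegral_congr_fun measurableSet_Icc fun x hx => ?_
      obtain ⟨hx1, hx2⟩ := hx
      refine min_eq_right ?_
      nlinarith [mul_nonneg (by linarith : (0:ℝ) ≤ 5/8 - a) (by linarith : (0:ℝ) ≤ 2*x - a - 5/8)]
    have eA : ∫ x in Set.Icc (9/16:ℝ) (37/64), (x - 17/32)^2 ∂P
        ≤ ∫ x in Set.Icc (1/2:ℝ) (37/64), F x ∂P := by
      have step1 : ∫ x in Set.Icc (9/16:ℝ) (37/64), (x - 17/32)^2 ∂P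
          ≤ ∫ x in Set.Icc (9/16:ℝ) (37/64), F x ∂P := by
        refine setIntegral_mono_on (aux_intOn P (by fun_prop) _ _) (aux_intOn P hFc _ _)
          measurableSet_Icc fun x hx => ?_
        obtain ⟨hx1, hx2⟩ := hx
        refine le_min ?_ ?_
        · nlinarith [mul_nonneg (by linarith : (0:ℝ) ≤ 17/32 - a)
            (by linarith : (0:ℝ) ≤ 2*x - a - 17/32)]
        · nlinarith [mul_nonneg (by norm_num : (0:ℝ) ≤ (3:ℝ)/32)
            (by linarith : (0:ℝ) ≤ 37/32 - 2*x)]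
      have step2 : ∫ x in Set.Icc (9/16:ℝ) (37/64), F x ∂P
          ≤ ∫ x in Set.Icc (1/2:ℝ) (37/64), F x ∂P := by
        refine setIntegral_mono_set (aux_intOn P hFc _ _)
          (ae_of_all _ fun x => le_min (sq_nonneg _) (sq_nonneg _))
          (HasSubset.Subset.eventuallyLE (Set.Icc_subset_Icc (by norm_num) le_rfl))
        
      linarith
    have hbound : 7695/33488896 + 243/4186112
        ≤ ∫ x in Set.Icc (1/2:ℝ) (5/8), F x ∂P := by
      rw [hsplit, eB, hD]
      linarith [eA, hEJ22]
    constructor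
    · linarith [hbound]
    constructor
    · intro hc
      exfalso
      rw [hc] at hbound
      norm_num at hbound
    · intro hc
      exfalso
      rw [hc] at hA1
      norm_num at hA1
  · push_neg at hA1
    have eA : ∫ x in Set.Icc (1/2:ℝ) (37/64), F x ∂P
        = ∫ x in Set.Icc (1/2:ℝ) (37/64), (x - a)^2 ∂P := by
      refine setIntegral_congr_fun measurableSet_Icc fun x hx => ?_
      obtain ⟨hx1, hx2⟩ := hx
      refine min_eq_left ?_
      nlinarith [mul_nonneg (by linarith : (0:ℝ) ≤ 5/8 - a) (by linarith : (0:ℝ) ≤ a + 5/8 - 2*x)]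
    by_cases hA2 : a ≤ 9/16
    · -- case β : the equality regime
      have eB : ∫ x in Set.Icc (19/32:ℝ) (5/8), F x ∂P
          = ∫ x in Set.Icc (19/32:ℝ) (5/8), (x - 5/8)^2 ∂P := by
        refine setIntegral_congr_fun measurableSet_Icc fun x hx => ?_
        obtain ⟨hx1, hx2⟩ := hx
        refine min_eq_right ?_
        nlinarith [mul_nonneg (by linarith : (0:ℝ) ≤ 5/8 - a) (by linarith : (0:ℝ) ≤ 2*x - a - 5/8)]
      have hval : ∫ x in Set.Icc (1/2:ℝ) (5/8), F x ∂P
          = 2403/10465280 + (15/64)*(a - 11/20)^2 := by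
        rw [hsplit, eA, eB, hD, hQ a]
        ring
      constructor
      · rw [hval]
        nlinarith [sq_nonneg (a - 11/20)]
      constructor
      · intro hc
        rw [hval] at hc
        have hz : (a - 11/20)^2 = 0 := by linarith
        have := (pow_eq_zero_iff two_ne_zero).mp hz
        linarith [sub_eq_zero.mp this]
      · intro hc
        rw [hval, hc]
        norm_num
    · push_neg at hA2
      by_cases hA3 : a ≤ 37/64
      · -- case γ
        have hBsplit : ∫ x in Set.Icc (19/32:ℝ) (5/8), F x ∂P
            = ∫ x in Set.Icc (19/32:ℝ) (77/128), F x ∂P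
              + ∫ x in Set.Icc (39/64:ℝ) (5/8), F x ∂P :=
          aux_split3 P hFc (by norm_num) (by norm_num) (by norm_num) hg5
        have e23 : ∫ x in Set.Icc (19/32:ℝ) (77/128), (x - 37/64)^2 ∂P
            ≤ ∫ x in Set.Icc (19/32:ℝ) (77/128), F x ∂P := by
          refine setIntegral_mono_on (aux_intOn P (by fun_prop) _ _) (aux_intOn P hFc _ _)
            measurableSet_Icc fun x hx => ?_
          obtain ⟨hx1, hx2⟩ := hx
          refine le_min ?_ ?_
          · nlinarith [mul_nonneg (by linarith : (0:ℝ) ≤ 37/64 - a)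
              (by linarith : (0:ℝ) ≤ 2*x - a - 37/64)]
          · nlinarith [mul_nonneg (by norm_num : (0:ℝ) ≤ (3:ℝ)/64)
              (by linarith : (0:ℝ) ≤ 77/64 - 2*x)]
        have eBr : ∫ x in Set.Icc (39/64:ℝ) (5/8), F x ∂P
            = ∫ x in Set.Icc (39/64:ℝ) (5/8), (x - 5/8)^2 ∂P := by
          refine setIntegral_congr_fun measurableSet_Icc fun x hx => ?_
          obtain ⟨hx1, hx2⟩ := hx
          refine min_eq_right ?_
          nlinarith [mul_nonneg (by linarith : (0:ℝ) ≤ 5/8 - a)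
            (by linarith : (0:ℝ) ≤ 2*x - a - 5/8)]
        have hvalA : ∫ x in Set.Icc (1/2:ℝ) (37/64), (x - a)^2 ∂P
            = 2403/10465280 - 243/4186112 + (15/64)*(a - 11/20)^2 := by
          rw [hQ a]; ring
        have hsq : (1/80:ℝ)^2 < (a - 11/20)^2 := by
          have h' : (1/80:ℝ) < a - 11/20 := by linarith
          exact pow_lt_pow_left₀ h' (by norm_num) two_ne_zero
        have hstrict : 2403/10465280 < ∫ x in Set.Icc (1/2:ℝ) (5/8), F x ∂P := by
          rw [hsplit, eA, hvalA, hBsplit, eBr, hBr]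
          have := e23
          rw [hE23] at this
          nlinarith [hsq, this]
        constructor
        · linarith [hstrict]
        constructor
        · intro hc
          exfalso
          rw [hc] at hstrict
          norm_num at hstrict
        · intro hc
          exfalso
          rw [hc] at hA2
          norm_num at hA2
      · -- case δ
        push_neg at hA3
        have eBpos : 0 ≤ ∫ x in Set.Icc (19/32:ℝ) (5/8), F x ∂P :=
          setIntegral_nonneg measurableSet_Icc fun x _ =>
            le_min (sq_nonneg _) (sq_nonneg _)
        have hvalA : ∫ x in Set.Icc (1/2:ℝ) (37/64), (x - a)^2 ∂P
            = 2403/10465280 - 243/4186112 + (15/64)*(a - 11/20)^2 := by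
          rw [hQ a]; ring
        have hsq : (9/320:ℝ)^2 < (a - 11/20)^2 := by
          have h' : (9/320:ℝ) < a - 11/20 := by linarith
          exact pow_lt_pow_left₀ h' (by norm_num) two_ne_zero
        have hstrict : 2403/10465280 < ∫ x in Set.Icc (1/2:ℝ) (5/8), F x ∂P := by
          rw [hsplit, eA, hvalA]
          nlinarith [hsq, eBpos]
        constructor
        · linarith [hstrict]
        constructor
        · intro hc
          exfalso
          rw [hc] at hstrict
          norm_num at hstrict
        · intro hc
          exfalso
          rw [hc] at hA3
          norm_num at hA3
end
end
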